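/- For v > n, the set of ξ ∈ ℝ^n such that ‖q·ξ‖ < |q|^{-v} for infinitely many nonzero q ∈ ℤ^n (where |q| = max_i |q_i| and q·ξ is the standard inner product) has Lebesgue measure zero. -/

import Mathlib

noncomputable def nint (x : ℝ) : ℝ := |x - round x|
def height {n : ℕ} (q : Fin n → ℤ) : ℕ := Finset.univ.sup fun i => (q i).natAbs

open MeasureTheory ENNReal

lemma nint_add_int (x : ℝ) (k : ℤ) : nint (x + k) = nint x := by
  unfold nint
  rw [round_add_intCast]
  push_cast
  ring_nf

lemma tsum_pi_prod (m : ℕ) (f : ℤ → ℝ≥0∞) :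
    ∑' q : Fin m → ℤ, ∏ i, f (q i) = (∑' k : ℤ, f k) ^ m := by
  induction m with
  | zero =>
    simp only [pow_zero, Finset.univ_eq_empty, Finset.prod_empty]
    exact tsum_eq_single (fun i => i.elim0) fun b hb => (hb (Subsingleton.elim b _)).elim
  | succ m ih =>
    rw [← (Fin.consEquiv (fun _ : Fin (m + 1) => ℤ)).tsum_eq, ENNReal.tsum_prod']
    simp only [Fin.consEquiv_apply]
    have : ∀ (k : ℤ) (r : Fin m → ℤ),
        (∏ i, f ((Fin.cons k r : Fin (m+1) → ℤ) i)) = f k * ∏ i, f (r i) := by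
      intro k r
      rw [Fin.prod_univ_succ]
      simp
    simp only [this]
    rw [pow_succ, ← ih, mul_comm]
    simp_rw [ENNReal.tsum_mul_left, ENNReal.tsum_mul_right]

lemma summable_one_add_abs (s : ℝ) (hs : 1 < s) :
    Summable (fun k : ℤ => (1 + |(k : ℝ)|) ^ (-s)) := by
  have hnat : Summable (fun n : ℕ => ((n : ℝ)) ^ (-s)) :=
    Real.summable_nat_rpow.mpr (by linarith)
  have h1 : Summable (fun n : ℕ => (1 + (n : ℝ)) ^ (-s)) := by
    have := (summable_nat_add_iff 1).mpr hnat
    refine this.congr fun n => ?_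
    push_cast
    ring_nf
  apply Summable.of_nat_of_neg
  · exact h1.congr fun n => by norm_num
  · exact h1.congr fun n => by push_cast; norm_num

lemma oneD_bound (ε : ℝ) (hε : 0 < ε) (R : ℤ) :
    volume ({s : ℝ | nint s < ε} ∩ Set.Icc (-(R : ℝ)) R)
      ≤ (Finset.Icc (-(R + 1)) (R + 1)).card * ENNReal.ofReal (2 * ε) := by
  have hsub : {s : ℝ | nint s < ε} ∩ Set.Icc (-(R : ℝ)) R
      ⊆ ⋃ k ∈ Finset.Icc (-(R + 1)) (R + 1), Set.Ioo ((k : ℝ) - ε) (k + ε) := by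
    rintro s ⟨hs, hmem⟩
    have h1 : |s - round s| < ε := hs
    have h2 : |(round s : ℝ) - s| ≤ 1 / 2 := by
      simpa [abs_sub_comm] using abs_sub_round s
    have hk : round s ∈ Finset.Icc (-(R + 1)) (R + 1) := by
      simp only [Finset.mem_Icc]
      constructor
      · have : -(R : ℝ) - 1 ≤ (round s : ℝ) := by
          have := abs_le.mp h2
          have := hmem.1
          linarith
        have h3 : ((-(R + 1) : ℤ) : ℝ) ≤ (round s : ℝ) := by push_cast; linarith
        exact_mod_cast h3
      · have : (round s : ℝ) ≤ (R : ℝ) + 1 := by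
          have := abs_le.mp h2
          have := hmem.2
          linarith
        exact_mod_cast this
    refine Set.mem_biUnion hk ?_
    have h4 := abs_lt.mp h1
    exact ⟨by linarith [h4.2], by linarith [h4.1]⟩
  calc volume ({s : ℝ | nint s < ε} ∩ Set.Icc (-(R : ℝ)) R)
      ≤ volume (⋃ k ∈ Finset.Icc (-(R + 1)) (R + 1), Set.Ioo ((k : ℝ) - ε) (k + ε)) :=
        measure_mono hsub
    _ ≤ ∑ k ∈ Finset.Icc (-(R + 1)) (R + 1), volume (Set.Ioo ((k : ℝ) - ε) (k + ε)) :=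
        measure_biUnion_finset_le _ _
    _ = (Finset.Icc (-(R + 1)) (R + 1)).card * ENNReal.ofReal (2 * ε) := by
        have : ∀ k : ℤ, volume (Set.Ioo ((k : ℝ) - ε) (k + ε)) = ENNReal.ofReal (2 * ε) := by
          intro k; rw [Real.volume_Ioo]; ring_nf
        simp only [this, Finset.sum_const, nsmul_eq_mul]

lemma one_le_height {n : ℕ} {q : Fin n → ℤ} (hq : q ≠ 0) : 1 ≤ height q := by
  obtain ⟨i, hi⟩ := Function.ne_iff.mp hq
  have h1 : (q i).natAbs ≤ height q :=
    Finset.le_sup (f := fun i => (q i).natAbs) (Finset.mem_univ i)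
  have h2 : 0 < (q i).natAbs := Int.natAbs_pos.mpr hi
  omega

lemma slab_bound (n : ℕ) (hn : 0 < n) (q : Fin n → ℤ) (hq : q ≠ 0) (ε : ℝ) (hε : 0 < ε) :
    volume {ξ : Fin n → ℝ | (∀ i, ξ i ∈ Set.Icc (0 : ℝ) 1) ∧ nint (∑ i, (q i : ℝ) * ξ i) < ε}
      ≤ ENNReal.ofReal ((4 * n + 6) * ε) := by
  have hne : (Finset.univ : Finset (Fin n)).Nonempty := by
    simpa [Finset.univ_nonempty_iff] using Fin.pos_iff_nonempty.mp hn
  obtain ⟨i₀, -, hi₀⟩ := Finset.exists_mem_eq_sup Finset.univ hne fun i => (q i).natAbs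
  set h : ℕ := height q with hh
  have hh1 : 1 ≤ h := one_le_height hq
  have habs : ∀ i, (q i).natAbs ≤ h := fun i => Finset.le_sup (f := fun i => (q i).natAbs) (Finset.mem_univ i)
  have hqi₀ : (q i₀).natAbs = h := hi₀.symm
  -- the matrix
  set M : Matrix (Fin n) (Fin n) ℝ :=
    (1 : Matrix (Fin n) (Fin n) ℝ).updateRow i₀ (fun j => (q j : ℝ)) with hM
  have hrow : (fun j => ((q j : ℝ))) = ∑ k, ((q k : ℝ)) • (1 : Matrix (Fin n) (Fin n) ℝ) k := by
    funext j
    simp [Matrix.one_apply, Finset.sum_apply, Finset.sum_ite_eq]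
  have hdet : M.det = (q i₀ : ℝ) := by
    rw [hM, hrow, Matrix.det_updateRow_sum]
    simp
  set T : (Fin n → ℝ) →ₗ[ℝ] (Fin n → ℝ) := Matrix.toLin' M with hT
  have hdetT : LinearMap.det T = (q i₀ : ℝ) := by rw [hT, LinearMap.det_toLin', hdet]
  have hq0 : (q i₀ : ℝ) ≠ 0 := by
    simp only [ne_eq, Int.cast_eq_zero]
    intro h0
    rw [h0] at hqi₀
    omega
  set R : ℤ := (n : ℤ) * h with hR
  set B : Set ℝ := {s : ℝ | nint s < ε} ∩ Set.Icc (-(R : ℝ)) R with hB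
  set S : Set (Fin n → ℝ) :=
    Set.univ.pi (fun j => if j = i₀ then B else Set.Icc (0 : ℝ) 1) with hS
  -- the subset relation
  have hsub : {ξ : Fin n → ℝ | (∀ i, ξ i ∈ Set.Icc (0 : ℝ) 1) ∧
      nint (∑ i, (q i : ℝ) * ξ i) < ε} ⊆ T ⁻¹' S := by
    rintro ξ ⟨hξC, hξn⟩
    have hTξ : ∀ j, T ξ j = ∑ k, M j k * ξ k := by
      intro j
      simp [hT, Matrix.toLin'_apply, Matrix.mulVec, dotProduct]
    intro j _
    simp only
    by_cases hj : j = i₀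
    · subst hj
      rw [if_pos rfl]
      have hval : T ξ j = ∑ k, (q k : ℝ) * ξ k := by
        rw [hTξ j]
        exact Finset.sum_congr rfl fun k _ => by rw [hM, Matrix.updateRow_self]
      refine ⟨by rw [hval]; exact hξn, ?_⟩
      rw [hval]
      have hbound : |∑ k, (q k : ℝ) * ξ k| ≤ (R : ℝ) := by
        calc |∑ k, (q k : ℝ) * ξ k| ≤ ∑ k, |(q k : ℝ) * ξ k| := Finset.abs_sum_le_sum_abs _ _
          _ ≤ ∑ _k : Fin n, (h : ℝ) := by
              refine Finset.sum_le_sum fun k _ => ?_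
              rw [abs_mul]
              have h1 : |(q k : ℝ)| ≤ (h : ℝ) := by
                have h1a := habs k
                rw [← Int.cast_abs, Int.abs_eq_natAbs]
                exact_mod_cast h1a
              have h2 : |ξ k| ≤ 1 := by
                rw [abs_le]; exact ⟨by linarith [(hξC k).1], (hξC k).2⟩
              calc |(q k : ℝ)| * |ξ k| ≤ |(q k : ℝ)| * 1 :=
                    mul_le_mul_of_nonneg_left h2 (abs_nonneg _)
                _ ≤ (h : ℝ) := by rw [mul_one]; exact h1
          _ = (R : ℝ) := by rw [Finset.sum_const, Finset.card_univ, Fintype.card_fin]; push_cast [hR]; ring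
      exact abs_le.mp hbound
    · rw [if_neg hj]
      have : T ξ j = ξ j := by
        rw [hTξ j]
        have : ∀ k, M j k = if j = k then (1 : ℝ) else 0 := by
          intro k
          rw [hM, Matrix.updateRow_ne hj, Matrix.one_apply]
        simp only [this, ite_mul, one_mul, zero_mul, Finset.sum_ite_eq, Finset.mem_univ, if_pos]
      rw [this]
      exact hξC j
  -- measure of S
  have hSmeas : volume S ≤ (Finset.Icc (-(R + 1)) (R + 1)).card * ENNReal.ofReal (2 * ε) := by
    rw [hS, volume_pi_pi]
    calc (∏ j, volume (if j = i₀ then B else Set.Icc (0 : ℝ) 1))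
        ≤ ∏ j, (if j = i₀ then (Finset.Icc (-(R+1)) (R+1)).card * ENNReal.ofReal (2 * ε)
            else 1) := by
          refine Finset.prod_le_prod' fun j _ => ?_
          by_cases hj : j = i₀
          · rw [if_pos hj, if_pos hj, hB]
            exact oneD_bound ε hε R
          · rw [if_neg hj, if_neg hj, Real.volume_Icc]
            simp
      _ = (Finset.Icc (-(R+1)) (R+1)).card * ENNReal.ofReal (2 * ε) := by
          rw [Finset.prod_ite_eq' Finset.univ i₀]
          simp
  -- put it together
  calc volume {ξ : Fin n → ℝ | (∀ i, ξ i ∈ Set.Icc (0 : ℝ) 1) ∧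
        nint (∑ i, (q i : ℝ) * ξ i) < ε}
      ≤ volume (T ⁻¹' S) := measure_mono hsub
    _ = ENNReal.ofReal |(LinearMap.det T)⁻¹| * volume S := by
        rw [MeasureTheory.Measure.addHaar_preimage_linearMap volume (by rw [hdetT]; exact hq0)]
    _ ≤ ENNReal.ofReal ((h : ℝ)⁻¹) *
          ((Finset.Icc (-(R+1)) (R+1)).card * ENNReal.ofReal (2 * ε)) := by
        refine mul_le_mul' (le_of_eq ?_) hSmeas
        rw [hdetT, abs_inv]
        congr 1
        rw [← Int.cast_abs, Int.abs_eq_natAbs, hqi₀]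
        push_cast; ring
    _ ≤ ENNReal.ofReal ((4 * n + 6) * ε) := by
        have hcard : (Finset.Icc (-(R+1)) (R+1)).card = (2 * R + 3).toNat := by
          rw [Int.card_Icc]
          congr 1
          ring
        rw [hcard, ← ENNReal.ofReal_natCast, ← ENNReal.ofReal_mul (by positivity),
          ← ENNReal.ofReal_mul (by positivity)]
        refine ENNReal.ofReal_le_ofReal ?_
        have hRval : ((2 * R + 3).toNat : ℝ) = 2 * n * h + 3 := by
          have h0 : ((2 * R + 3).toNat : ℤ) = 2 * R + 3 :=
            Int.toNat_of_nonneg (by positivity)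
          have h0' : ((2 * R + 3).toNat : ℝ) = ((2 * R + 3 : ℤ) : ℝ) := by exact_mod_cast h0
          rw [h0', hR]; push_cast; ring
        rw [hRval]
        have hhpos : (0 : ℝ) < h := by exact_mod_cast Nat.lt_of_lt_of_le Nat.zero_lt_one hh1
        have hh1' : (1 : ℝ) ≤ h := by exact_mod_cast hh1
        rw [inv_mul_le_iff₀ hhpos]
        nlinarith [mul_le_mul_of_nonneg_left hh1' hε.le, Nat.cast_nonneg (α := ℝ) n]

lemma tsum_height_ne_top (n : ℕ) (hn : 0 < n) (v : ℝ) (hv : (n : ℝ) < v) :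
    ∑' q : Fin n → ℤ, (if q = 0 then 0 else ENNReal.ofReal ((height q : ℝ) ^ (-v))) ≠ ⊤ := by
  have hnR : (0 : ℝ) < n := by exact_mod_cast hn
  set s : ℝ := v / n with hs
  have hs1 : 1 < s := (one_lt_div hnR).mpr hv
  have hpt : ∀ q : Fin n → ℤ, (if q = 0 then 0 else ENNReal.ofReal ((height q : ℝ) ^ (-v)))
      ≤ ENNReal.ofReal ((2 : ℝ) ^ v) * ∏ i, ENNReal.ofReal ((1 + |(q i : ℝ)|) ^ (-s)) := by
    intro q
    by_cases hq : q = 0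
    · simp [hq]
    · rw [if_neg hq]
      have hh1 : 1 ≤ height q := one_le_height hq
      have hh1' : (1 : ℝ) ≤ (height q : ℝ) := by exact_mod_cast hh1
      have hhpos : (0 : ℝ) < (height q : ℝ) := by linarith
      have habs : ∀ i, |(q i : ℝ)| ≤ (height q : ℝ) := by
        intro i
        have := Finset.le_sup (f := fun i => (q i).natAbs) (Finset.mem_univ i)
        rw [← Int.cast_abs, Int.abs_eq_natAbs]
        exact_mod_cast this
      have hreal : (height q : ℝ) ^ (-v) ≤ (2 : ℝ) ^ v * ∏ i, (1 + |(q i : ℝ)|) ^ (-s) := by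
        have hstep : ∀ i : Fin n, (2 * (height q : ℝ)) ^ (-s) ≤ (1 + |(q i : ℝ)|) ^ (-s) := by
          intro i
          refine Real.rpow_le_rpow_of_nonpos (by positivity) ?_ (by linarith)
          linarith [habs i]
        have hprod : ((2 * (height q : ℝ)) ^ (-s)) ^ n ≤ ∏ i, (1 + |(q i : ℝ)|) ^ (-s) := by
          calc ((2 * (height q : ℝ)) ^ (-s)) ^ n
              = ∏ _i : Fin n, (2 * (height q : ℝ)) ^ (-s) := by
                rw [Finset.prod_const, Finset.card_univ, Fintype.card_fin]
            _ ≤ ∏ i, (1 + |(q i : ℝ)|) ^ (-s) :=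
                Finset.prod_le_prod (fun i _ => by positivity) (fun i _ => hstep i)
        have hpow : ((2 * (height q : ℝ)) ^ (-s)) ^ n = (2 * (height q : ℝ)) ^ (-v) := by
          rw [← Real.rpow_natCast ((2 * (height q : ℝ)) ^ (-s)) n, ← Real.rpow_mul (by positivity)]
          congr 1
          field_simp [hs]
          rw [hs, div_mul_cancel₀ v hnR.ne']
        have hmul : (2 : ℝ) ^ v * (2 * (height q : ℝ)) ^ (-v) = (height q : ℝ) ^ (-v) := by
          rw [Real.mul_rpow (by norm_num) hhpos.le, ← mul_assoc, ← Real.rpow_add (by norm_num)]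
          simp
        calc (height q : ℝ) ^ (-v) = (2 : ℝ) ^ v * (2 * (height q : ℝ)) ^ (-v) := hmul.symm
          _ = (2 : ℝ) ^ v * ((2 * (height q : ℝ)) ^ (-s)) ^ n := by rw [hpow]
          _ ≤ (2 : ℝ) ^ v * ∏ i, (1 + |(q i : ℝ)|) ^ (-s) := by
              exact mul_le_mul_of_nonneg_left hprod (by positivity)
      calc ENNReal.ofReal ((height q : ℝ) ^ (-v))
          ≤ ENNReal.ofReal ((2 : ℝ) ^ v * ∏ i, (1 + |(q i : ℝ)|) ^ (-s)) :=
            ENNReal.ofReal_le_ofReal hreal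
        _ = ENNReal.ofReal ((2 : ℝ) ^ v) * ∏ i, ENNReal.ofReal ((1 + |(q i : ℝ)|) ^ (-s)) := by
            rw [ENNReal.ofReal_mul (by positivity), ENNReal.ofReal_prod_of_nonneg
              (fun i _ => by positivity)]
  refine ne_top_of_le_ne_top ?_ (ENNReal.tsum_le_tsum hpt)
  rw [ENNReal.tsum_mul_left, tsum_pi_prod n (fun k => ENNReal.ofReal ((1 + |(k : ℝ)|) ^ (-s)))]
  refine ENNReal.mul_ne_top ENNReal.ofReal_ne_top (ENNReal.pow_ne_top ?_)
  rw [← ENNReal.ofReal_tsum_of_nonneg (fun k => by positivity) (summable_one_add_abs s hs1)]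
  exact ENNReal.ofReal_ne_top

theorem dual_approx_null (n : ℕ) (hn : 0 < n) (v : ℝ) (hv : (n : ℝ) < v) :
    MeasureTheory.volume
      {ξ : Fin n → ℝ |
        {q : Fin n → ℤ | q ≠ 0 ∧
          nint (∑ i, (q i : ℝ) * ξ i) < (height q : ℝ) ^ (-v)}.Infinite} = 0 := by
  set E : Set (Fin n → ℝ) := {ξ | {q : Fin n → ℤ | q ≠ 0 ∧
    nint (∑ i, (q i : ℝ) * ξ i) < (height q : ℝ) ^ (-v)}.Infinite} with hE
  set C : Set (Fin n → ℝ) := {ξ | ∀ i, ξ i ∈ Set.Icc (0 : ℝ) 1} with hC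
  set S : (Fin n → ℤ) → Set (Fin n → ℝ) := fun q =>
    {ξ | (∀ i, ξ i ∈ Set.Icc (0 : ℝ) 1) ∧ q ≠ 0 ∧
      nint (∑ i, (q i : ℝ) * ξ i) < (height q : ℝ) ^ (-v)} with hSdef
  have hSle : ∀ q, volume (S q) ≤ ENNReal.ofReal (4 * n + 6) *
      (if q = 0 then 0 else ENNReal.ofReal ((height q : ℝ) ^ (-v))) := by
    intro q
    by_cases hq : q = 0
    · have hemp : S q = ∅ := by
        ext ξ
        simp [hSdef, hq]
      rw [if_pos hq, hemp]
      simp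
    · rw [if_neg hq, ← ENNReal.ofReal_mul (by positivity)]
      have hhpos : (0 : ℝ) < (height q : ℝ) := by
        have := one_le_height hq
        exact_mod_cast Nat.lt_of_lt_of_le Nat.zero_lt_one this
      have hε : 0 < (height q : ℝ) ^ (-v) := Real.rpow_pos_of_pos hhpos _
      refine le_trans (measure_mono ?_) (slab_bound n hn q hq _ hε)
      intro ξ hξ
      exact ⟨hξ.1, hξ.2.2⟩
  have hsum : ∑' q : Fin n → ℤ, volume (S q) ≠ ⊤ := by
    refine ne_top_of_le_ne_top ?_ (ENNReal.tsum_le_tsum hSle)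
    rw [ENNReal.tsum_mul_left]
    exact ENNReal.mul_ne_top ENNReal.ofReal_ne_top (tsum_height_ne_top n hn v hv)
  have hEC : volume (E ∩ C) = 0 := by
    refine le_antisymm ?_ zero_le
    refine ge_of_tendsto' (ENNReal.tendsto_tsum_compl_atTop_zero hsum) fun F => ?_
    have hcover : E ∩ C ⊆ ⋃ q : {q : Fin n → ℤ // q ∉ F}, S q.1 := by
      rintro ξ ⟨hξE, hξC⟩
      obtain ⟨q, hqW, hqF⟩ := Set.Infinite.exists_notMem_finset hξE F
      exact Set.mem_iUnion.mpr ⟨⟨q, hqF⟩, hξC, hqW.1, hqW.2⟩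
    exact le_trans (measure_mono hcover) (measure_iUnion_le _)
  have hEinv : ∀ (ξ : Fin n → ℝ) (m : Fin n → ℤ), ξ ∈ E →
      (ξ + fun i => ((m i : ℝ))) ∈ E := by
    intro ξ m hξ
    have hset : {q : Fin n → ℤ | q ≠ 0 ∧
        nint (∑ i, (q i : ℝ) * (ξ + fun i => ((m i : ℝ))) i) < (height q : ℝ) ^ (-v)}
        = {q : Fin n → ℤ | q ≠ 0 ∧
        nint (∑ i, (q i : ℝ) * ξ i) < (height q : ℝ) ^ (-v)} := by
      ext q
      have hnint : nint (∑ i, (q i : ℝ) * (ξ + fun i => ((m i : ℝ))) i)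
          = nint (∑ i, (q i : ℝ) * ξ i) := by
        have hsum2 : ∑ i, (q i : ℝ) * (ξ + fun i => ((m i : ℝ))) i
            = (∑ i, (q i : ℝ) * ξ i) + ((∑ i, q i * m i : ℤ) : ℝ) := by
          simp only [Pi.add_apply]
          push_cast
          rw [← Finset.sum_add_distrib]
          exact Finset.sum_congr rfl fun i _ => by ring
        rw [hsum2, nint_add_int]
      simp only [Set.mem_setOf_eq, hnint]
    show Set.Infinite _
    rw [hset]
    exact hξ
  have hcover2 : E ⊆ ⋃ m : Fin n → ℤ, (fun ξ => ξ + fun i => ((m i : ℝ))) ⁻¹' (E ∩ C) := by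
    intro ξ hξ
    refine Set.mem_iUnion.mpr ⟨fun i => -⌊ξ i⌋, hEinv ξ _ hξ, fun i => ?_⟩
    simp only [Pi.add_apply, Int.cast_neg]
    constructor
    · linarith [Int.floor_le (ξ i)]
    · linarith [Int.lt_floor_add_one (ξ i)]
  refine le_antisymm ?_ zero_le
  calc volume E ≤ ∑' m : Fin n → ℤ,
        volume ((fun ξ => ξ + fun i => ((m i : ℝ))) ⁻¹' (E ∩ C)) :=
      le_trans (measure_mono hcover2) (measure_iUnion_le _)
    _ = 0 := by
      have : ∀ m : Fin n → ℤ,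
          volume ((fun ξ => ξ + fun i => ((m i : ℝ))) ⁻¹' (E ∩ C)) = 0 := by
        intro m
        rw [measure_preimage_add_right, hEC]
      rw [tsum_congr this, tsum_zero]
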